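/- arXiv:1602.07359 — 3 statements merged into one kernel-verified Lean document; each statement's English description precedes it below -/
import Mathlib

section
/- Let T be a (nondegenerate) triangle in ℝ² with vertices a₁, a₂, a₃, edges σ₁, σ₂, σ₃ (σᵢ opposite to aᵢ), circumcenter c_T, area |T|, edge lengths |σᵢ|, and outward unit normals n_{T,σᵢ}. Then |T|·c_T = Σᵢ |σᵢ| · ((|v₁^{σᵢ}|² + |v₂^{σᵢ}|²)/4) · n_{T,σᵢ}, where v₁^{σ}, v₂^{σ} denote the two endpoints of the edge σ. -/
open Metric MeasureTheory Pointwise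

noncomputable abbrev E2 := EuclideanSpace ℝ (Fin 2)

lemma vol_corner : volume {x : ℝ × ℝ | 0 ≤ x.1 ∧ 0 ≤ x.2 ∧ x.1 + x.2 ≤ 1} = ENNReal.ofReal (1/2) := by
  have hmeas : MeasurableSet {x : ℝ × ℝ | 0 ≤ x.1 ∧ 0 ≤ x.2 ∧ x.1 + x.2 ≤ 1} := by
    apply MeasurableSet.inter
    · exact measurableSet_le measurable_const measurable_fst
    apply MeasurableSet.inter
    · exact measurableSet_le measurable_const measurable_snd
    · exact measurableSet_le (measurable_fst.add measurable_snd) measurable_const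
  rw [Measure.volume_eq_prod, Measure.prod_apply hmeas]
  have hslice : ∀ x : ℝ, (volume (Prod.mk x ⁻¹' {x : ℝ × ℝ | 0 ≤ x.1 ∧ 0 ≤ x.2 ∧ x.1 + x.2 ≤ 1}))
      = Set.indicator (Set.Icc (0:ℝ) 1) (fun x => ENNReal.ofReal (1 - x)) x := by
    intro x
    rcases le_or_gt 0 x with hx | hx
    · have : Prod.mk x ⁻¹' {x : ℝ × ℝ | 0 ≤ x.1 ∧ 0 ≤ x.2 ∧ x.1 + x.2 ≤ 1} = Set.Icc 0 (1 - x) := by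
        ext y; simp only [Set.mem_preimage, Set.mem_setOf_eq, Set.mem_Icc, hx, true_and]
        constructor
        · rintro ⟨h1, h2⟩; exact ⟨h1, by linarith⟩
        · rintro ⟨h1, h2⟩; exact ⟨h1, by linarith⟩
      rw [this, Real.volume_Icc]
      rcases le_or_gt x 1 with hx1 | hx1
      · rw [Set.indicator_of_mem (by exact ⟨hx, hx1⟩)]; norm_num
      · rw [Set.indicator_of_notMem (by simp [hx1.not_ge])]
        rw [ENNReal.ofReal_eq_zero]; linarith
    · have : Prod.mk x ⁻¹' {x : ℝ × ℝ | 0 ≤ x.1 ∧ 0 ≤ x.2 ∧ x.1 + x.2 ≤ 1} = ∅ := by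
        ext y; simp [hx.not_ge]
      rw [this, Set.indicator_of_notMem (by simp [hx.not_ge])]
      simp
  simp_rw [hslice]
  rw [lintegral_indicator measurableSet_Icc]
  rw [← ofReal_integral_eq_lintegral_ofReal]
  · congr 1
    rw [MeasureTheory.integral_Icc_eq_integral_Ioc, ← intervalIntegral.integral_of_le zero_le_one]
    simp [intervalIntegral.integral_sub intervalIntegrable_const, integral_id]
    norm_num
  · apply (ContinuousOn.integrableOn_compact isCompact_Icc)
    exact (continuous_const.sub continuous_id).continuousOn
  · filter_upwards [ae_restrict_mem measurableSet_Icc] with x hx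
    simp at hx ⊢; linarith [hx.2]


lemma vol_corner_E :
    volume {x : E2 | 0 ≤ x 0 ∧ 0 ≤ x 1 ∧ x 0 + x 1 ≤ 1} = ENNReal.ofReal (1/2) := by
  have hmeasP : MeasurableSet {x : ℝ × ℝ | 0 ≤ x.1 ∧ 0 ≤ x.2 ∧ x.1 + x.2 ≤ 1} := by
    apply MeasurableSet.inter
    · exact measurableSet_le measurable_const measurable_fst
    apply MeasurableSet.inter
    · exact measurableSet_le measurable_const measurable_snd
    · exact measurableSet_le (measurable_fst.add measurable_snd) measurable_const
  have key : volume {x : ℝ × ℝ | 0 ≤ x.1 ∧ 0 ≤ x.2 ∧ x.1 + x.2 ≤ 1} = ENNReal.ofReal (1/2) :=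
    vol_corner
  have h2 : volume {x : Fin 2 → ℝ | 0 ≤ x 0 ∧ 0 ≤ x 1 ∧ x 0 + x 1 ≤ 1} = ENNReal.ofReal (1/2) := by
    rw [← key]
    have := (volume_preserving_finTwoArrow ℝ).measure_preimage hmeasP.nullMeasurableSet
    convert this using 2
    rfl
  rw [← h2]
  have := (EuclideanSpace.volume_preserving_symm_measurableEquiv_toLp (Fin 2)).measure_preimage
    (s := {x : Fin 2 → ℝ | 0 ≤ x 0 ∧ 0 ≤ x 1 ∧ x 0 + x 1 ≤ 1}) (by
      apply NullMeasurableSet.inter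
      · exact (measurableSet_le measurable_const (measurable_pi_apply 0)).nullMeasurableSet
      apply NullMeasurableSet.inter
      · exact (measurableSet_le measurable_const (measurable_pi_apply 1)).nullMeasurableSet
      · exact (measurableSet_le ((measurable_pi_apply 0).add (measurable_pi_apply 1))
          measurable_const).nullMeasurableSet)
  convert this using 2
  rfl


lemma hull_corner :
    convexHull ℝ {(0:E2), EuclideanSpace.single 0 1, EuclideanSpace.single 1 1}
      = {x : E2 | 0 ≤ x 0 ∧ 0 ≤ x 1 ∧ x 0 + x 1 ≤ 1} := by
  apply le_antisymm
  · apply convexHull_min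
    · intro x hx
      rcases hx with rfl | rfl | rfl <;>
        simp [Set.mem_setOf_eq, EuclideanSpace.single_apply]
    · rintro x ⟨hx0, hx1, hxs⟩ y ⟨hy0, hy1, hys⟩ p q hp hq hpq
      refine ⟨?_, ?_, ?_⟩ <;>
        simp only [PiLp.add_apply, PiLp.smul_apply, smul_eq_mul]
      · positivity
      · positivity
      · nlinarith
  · rintro x ⟨hx0, hx1, hxs⟩
    set z : Fin 3 → E2 := ![0, EuclideanSpace.single 0 1, EuclideanSpace.single 1 1] with hz
    set w : Fin 3 → ℝ := ![1 - x 0 - x 1, x 0, x 1] with hw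
    have hsum : ∑ i, w i = 1 := by simp [hw, Fin.sum_univ_three]; ring
    have := Finset.centerMass_mem_convexHull (Finset.univ : Finset (Fin 3))
      (w := w) (z := z) (s := {(0:E2), EuclideanSpace.single 0 1, EuclideanSpace.single 1 1})
      (by intro i _; fin_cases i <;> simp [hw] <;> linarith)
      (by rw [hsum]; norm_num)
      (fun i _ => by
        fin_cases i <;> simp [hz, Set.mem_insert_iff] )
    convert this using 1
    rw [Finset.centerMass, hsum, inv_one, one_smul]
    have : ∑ i, w i • z i = x 0 • EuclideanSpace.single 0 (1:ℝ) + x 1 • EuclideanSpace.single 1 (1:ℝ) := by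
      simp [hw, hz, Fin.sum_univ_three]
    rw [this]
    ext j
    fin_cases j <;>
      simp [EuclideanSpace.single_apply, PiLp.add_apply, PiLp.smul_apply]

lemma edge_aux (n0 n1 e0 e1 u0 u1 D : ℝ)
    (hor : n0 * e0 + n1 * e1 = 0)
    (hu : n0^2 + n1^2 = 1)
    (hne : e0^2 + e1^2 ≠ 0)
    (hdet : e1 * u0 - e0 * u1 = -D)
    (hout : n0 * u0 + n1 * u1 < 0) :
    ∃ t : ℝ, n0 = t * e1 ∧ n1 = -(t * e0) ∧ t^2 * (e0^2+e1^2) = 1 ∧ 0 < t * D := by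
  have hn0 : n0 = (n0 * e1 - n1 * e0)/(e0^2+e1^2) * e1 := by
    field_simp
    linear_combination e0 * hor
  have hn1 : n1 = -((n0 * e1 - n1 * e0)/(e0^2+e1^2) * e0) := by
    field_simp
    linear_combination e1 * hor
  refine ⟨(n0 * e1 - n1 * e0)/(e0^2+e1^2), hn0, hn1, ?_, ?_⟩
  · have hsq : (n0 * e1 - n1 * e0)^2 = e0^2+e1^2 := by
      linear_combination (e0^2+e1^2) * hu - (n0*e0 + n1*e1) * hor
    rw [div_pow, div_mul_eq_mul_div, div_eq_one_iff_eq (by positivity)]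
    linear_combination (e0^2+e1^2) * hsq
  · have key : (n0*e1-n1*e0) * (e1*u0-e0*u1) = (n0*u0+n1*u1) * (e0^2+e1^2) := by
      linear_combination (-(u0*e0) - u1*e1) * hor
    have h2 : (n0 * e1 - n1 * e0)/(e0^2+e1^2) * (-D) < 0 := by
      calc (n0 * e1 - n1 * e0)/(e0^2+e1^2) * (-D)
          = (n0 * e1 - n1 * e0)/(e0^2+e1^2) * (e1 * u0 - e0 * u1) := by rw [hdet]
        _ = n0 * u0 + n1 * u1 := by
            rw [div_mul_eq_mul_div, key, mul_div_assoc, div_self hne, mul_one]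
        _ < 0 := hout
    nlinarith [h2]

lemma tri_area (a : Fin 3 → E2) :
    (volume (convexHull ℝ (Set.range a))).toReal =
      |(a 1 - a 0) 0 * (a 2 - a 0) 1 - (a 1 - a 0) 1 * (a 2 - a 0) 0| / 2 := by
  set b1 : E2 := a 1 - a 0
  set b2 : E2 := a 2 - a 0
  set L : E2 →ₗ[ℝ] E2 :=
    { toFun := fun x => x 0 • b1 + x 1 • b2
      map_add' := by
        intro x y
        simp only [PiLp.add_apply, add_smul]
        abel
      map_smul' := by
        intro m x
        simp only [PiLp.smul_apply, smul_eq_mul, RingHom.id_apply, mul_smul, smul_add] } with hL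
  have hrange : Set.range a = {a 0, a 1, a 2} := by
    ext x
    constructor
    · rintro ⟨i, rfl⟩; fin_cases i <;> simp
    · rintro (rfl | rfl | rfl) <;> exact ⟨_, rfl⟩
  have himg : {a 0, a 1, a 2} =
      a 0 +ᵥ (L '' {(0:E2), EuclideanSpace.single 0 1, EuclideanSpace.single 1 1}) := by
    rw [Set.image_insert_eq, Set.image_insert_eq, Set.image_singleton]
    have h0 : L 0 = 0 := map_zero L
    have h1 : L (EuclideanSpace.single 0 1) = b1 := by
      simp [hL, EuclideanSpace.single_apply]
    have h2 : L (EuclideanSpace.single 1 1) = b2 := by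
      simp [hL, EuclideanSpace.single_apply]
    rw [h0, h1, h2]
    rw [Set.vadd_set_insert, Set.vadd_set_insert, Set.vadd_set_singleton]
    congr 1
    · simp
    congr 1
    · simp [b1]
    · congr 1
      simp [b2]
  have hdetL : LinearMap.det L = b1 0 * b2 1 - b1 1 * b2 0 := by
    rw [← LinearMap.det_toMatrix (EuclideanSpace.basisFun (Fin 2) ℝ).toBasis L]
    rw [Matrix.det_fin_two]
    have entry : ∀ i j, LinearMap.toMatrix (EuclideanSpace.basisFun (Fin 2) ℝ).toBasis
        (EuclideanSpace.basisFun (Fin 2) ℝ).toBasis L i j = (L ((EuclideanSpace.basisFun (Fin 2) ℝ).toBasis j)) i := by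
      intro i j
      rw [LinearMap.toMatrix_apply]
      rw [OrthonormalBasis.coe_toBasis_repr_apply]
      rfl
    rw [entry, entry, entry, entry]
    simp only [OrthonormalBasis.coe_toBasis, EuclideanSpace.basisFun_apply]
    simp [hL, EuclideanSpace.single_apply]
    ring
  rw [hrange, himg, convexHull_vadd, measure_vadd, ← LinearMap.image_convexHull,
    Measure.addHaar_image_linearMap, hull_corner, vol_corner_E, hdetL]
  rw [← ENNReal.ofReal_mul (abs_nonneg _)]
  rw [ENNReal.toReal_ofReal (by positivity)]
  ring

set_option maxHeartbeats 2000000 in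
/-- for a nondegenerate triangle `T = conv{a 0, a 1, a 2} ⊂ ℝ²`, with edge `σᵢ`
(opposite vertex `a i`) of endpoints `a (i+1)`, `a (i+2)`, length `dist (a (i+1)) (a (i+2))`,
outward unit normal `n i`, and circumcenter `c` (equidistant from the three vertices),
`|T| • c = Σᵢ |σᵢ| ((|v₁^{σᵢ}|² + |v₂^{σᵢ}|²)/4) • n i`. -/
theorem stmt0 (a : Fin 3 → EuclideanSpace ℝ (Fin 2))
    (ha : AffineIndependent ℝ a)
    (n : Fin 3 → EuclideanSpace ℝ (Fin 2))
    (hunit : ∀ i, ‖n i‖ = 1)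
    (horth : ∀ i, (inner ℝ (n i) (a (i + 2) - a (i + 1)) : ℝ) = 0)
    (hout : ∀ i, (inner ℝ (n i) (a i - a (i + 1)) : ℝ) < 0)
    (c : EuclideanSpace ℝ (Fin 2))
    (hc01 : dist c (a 0) = dist c (a 1))
    (hc12 : dist c (a 1) = dist c (a 2)) :
    (volume (convexHull ℝ (Set.range a))).toReal • c =
      ∑ i, (dist (a (i + 1)) (a (i + 2)) *
        ((‖a (i + 1)‖ ^ 2 + ‖a (i + 2)‖ ^ 2) / 4)) • n i := by
  have inner_coords : ∀ x y : E2, (inner ℝ x y : ℝ) = x 0 * y 0 + x 1 * y 1 := by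
    intro x y
    simp [PiLp.inner_apply, RCLike.inner_apply, Fin.sum_univ_two]
    ring
  have norm_sq : ∀ x : E2, ‖x‖^2 = (x 0)^2 + (x 1)^2 := by
    intro x
    rw [← real_inner_self_eq_norm_sq, inner_coords]
    ring
  have dist_sq : ∀ x y : E2, dist x y ^ 2 = (x 0 - y 0)^2 + (x 1 - y 1)^2 := by
    intro x y
    rw [dist_eq_norm, norm_sq]
    simp [PiLp.sub_apply]
  set D : ℝ := (a 1 0 - a 0 0) * (a 2 1 - a 0 1) - (a 1 1 - a 0 1) * (a 2 0 - a 0 0) with hD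
  -- circumcenter equations
  have hC1 : (c 0 - a 0 0)^2 + (c 1 - a 0 1)^2 = (c 0 - a 1 0)^2 + (c 1 - a 1 1)^2 := by
    have := congrArg (fun r : ℝ => r ^ 2) hc01
    simpa only [dist_sq] using this
  have hC2 : (c 0 - a 1 0)^2 + (c 1 - a 1 1)^2 = (c 0 - a 2 0)^2 + (c 1 - a 2 1)^2 := by
    have := congrArg (fun r : ℝ => r ^ 2) hc12
    simpa only [dist_sq] using this
  -- volume
  have hvol : (volume (convexHull ℝ (Set.range a))).toReal = |D| / 2 := by
    rw [tri_area a, hD]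
    simp [PiLp.sub_apply]
  -- edges nondegenerate
  have hne : ∀ i : Fin 3, (a (i+2) 0 - a (i+1) 0)^2 + (a (i+2) 1 - a (i+1) 1)^2 ≠ 0 := by
    intro i h
    have hinj : a (i+1) ≠ a (i+2) := ha.injective.ne (by fin_cases i <;> decide)
    apply hinj
    have h0 : a (i+2) 0 - a (i+1) 0 = 0 := by nlinarith [sq_nonneg (a (i+2) 0 - a (i+1) 0), sq_nonneg (a (i+2) 1 - a (i+1) 1)]
    have h1 : a (i+2) 1 - a (i+1) 1 = 0 := by nlinarith [sq_nonneg (a (i+2) 0 - a (i+1) 0), sq_nonneg (a (i+2) 1 - a (i+1) 1)]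
    ext j
    fin_cases j
    · exact (by linarith : a (i+1) 0 = a (i+2) 0)
    · exact (by linarith : a (i+1) 1 = a (i+2) 1)
  -- edge data
  have edge : ∀ i : Fin 3, ∃ t : ℝ,
      n i 0 = t * (a (i+2) 1 - a (i+1) 1) ∧
      n i 1 = -(t * (a (i+2) 0 - a (i+1) 0)) ∧
      t^2 * ((a (i+2) 0 - a (i+1) 0)^2 + (a (i+2) 1 - a (i+1) 1)^2) = 1 ∧
      0 < t * D := by
    intro i
    apply edge_aux (n i 0) (n i 1) (a (i+2) 0 - a (i+1) 0) (a (i+2) 1 - a (i+1) 1)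
      (a i 0 - a (i+1) 0) (a i 1 - a (i+1) 1) D
    · have := horth i
      rw [inner_coords] at this
      simpa [PiLp.sub_apply] using this
    · have := hunit i
      rw [← norm_sq]
      rw [this]; norm_num
    · exact hne i
    · fin_cases i <;>
        simp only [Fin.isValue, Fin.zero_eta, Fin.mk_one, Fin.reduceFinMk, Fin.reduceAdd] <;>
        (rw [hD]; ring)
    · have := hout i
      rw [inner_coords] at this
      simpa [PiLp.sub_apply] using this
  choose t hn0 hn1 hts htD using edge
  -- D nonzero and sign
  have hDne : D ≠ 0 := by
    intro h
    have := htD 0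
    rw [h, mul_zero] at this
    exact lt_irrefl 0 this
  set ε : ℝ := if 0 < D then 1 else -1 with hε
  have habs : |D| = ε * D := by
    rw [hε]
    split_ifs with h
    · rw [abs_of_pos h, one_mul]
    · rw [abs_of_neg (lt_of_le_of_ne (not_lt.mp h) hDne), neg_one_mul]
  -- dist * t = ε
  have hlt : ∀ i : Fin 3, dist (a (i+1)) (a (i+2)) * t i = ε := by
    intro i
    have hd2 : dist (a (i+1)) (a (i+2)) ^ 2
        = (a (i+2) 0 - a (i+1) 0)^2 + (a (i+2) 1 - a (i+1) 1)^2 := by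
      rw [dist_sq]; ring
    have hsq1 : (dist (a (i+1)) (a (i+2)) * t i)^2 = 1 := by
      linear_combination (t i)^2 * hd2 + hts i
    have hdpos : 0 < dist (a (i+1)) (a (i+2)) := by
      rw [dist_pos]
      exact ha.injective.ne (by fin_cases i <;> decide)
    have hfac : (dist (a (i+1)) (a (i+2)) * t i - 1) * (dist (a (i+1)) (a (i+2)) * t i + 1) = 0 := by
      linear_combination hsq1
    rw [hε]
    split_ifs with h
    · have htpos : 0 < t i := by nlinarith [htD i]
      rcases mul_eq_zero.mp hfac with h' | h'
      · linarith
      · nlinarith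
    · have hDneg : D < 0 := lt_of_le_of_ne (not_lt.mp h) hDne
      have htneg : t i < 0 := by nlinarith [htD i]
      rcases mul_eq_zero.mp hfac with h' | h'
      · nlinarith
      · linarith
  have hn0a : n 0 0 = t 0 * (a 2 1 - a 1 1) := by simpa using hn0 0
  have hn0b : n 1 0 = t 1 * (a 0 1 - a 2 1) := by simpa using hn0 1
  have hn0c : n 2 0 = t 2 * (a 1 1 - a 0 1) := by simpa using hn0 2
  have hn1a : n 0 1 = -(t 0 * (a 2 0 - a 1 0)) := by simpa using hn1 0
  have hn1b : n 1 1 = -(t 1 * (a 0 0 - a 2 0)) := by simpa using hn1 1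
  have hn1c : n 2 1 = -(t 2 * (a 1 0 - a 0 0)) := by simpa using hn1 2
  have hlta : dist (a 1) (a 2) * t 0 = ε := by simpa using hlt 0
  have hltb : dist (a 2) (a 0) * t 1 = ε := by simpa using hlt 1
  have hltc : dist (a 0) (a 1) * t 2 = ε := by simpa using hlt 2
  rw [hvol, habs]
  have expand : ∀ j : Fin 3, ‖a j‖^2 = (a j 0)^2 + (a j 1)^2 := fun j => norm_sq (a j)
  ext j
  rw [Fin.sum_univ_three]
  fin_cases j <;>
    simp only [PiLp.add_apply, PiLp.smul_apply, smul_eq_mul, Fin.isValue, Fin.reduceAdd,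
      Fin.zero_eta, Fin.mk_one] <;>
    rw [expand 0, expand 1, expand 2]
  · rw [hn0a, hn0b, hn0c]
    linear_combination (-(((a 1 0)^2+(a 1 1)^2 + (a 2 0)^2+(a 2 1)^2)/4 * (a 2 1 - a 1 1))) * hlta
      + (-(((a 2 0)^2+(a 2 1)^2 + (a 0 0)^2+(a 0 1)^2)/4 * (a 0 1 - a 2 1))) * hltb
      + (-(((a 0 0)^2+(a 0 1)^2 + (a 1 0)^2+(a 1 1)^2)/4 * (a 1 1 - a 0 1))) * hltc
      + (ε * (a 2 1 - a 1 1)/4) * hC1 + (-(ε * (a 1 1 - a 0 1))/4) * hC2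
  · rw [hn1a, hn1b, hn1c]
    linear_combination ((((a 1 0)^2+(a 1 1)^2 + (a 2 0)^2+(a 2 1)^2)/4 * (a 2 0 - a 1 0))) * hlta
      + ((((a 2 0)^2+(a 2 1)^2 + (a 0 0)^2+(a 0 1)^2)/4 * (a 0 0 - a 2 0))) * hltb
      + ((((a 0 0)^2+(a 0 1)^2 + (a 1 0)^2+(a 1 1)^2)/4 * (a 1 0 - a 0 0))) * hltc
      + (ε * (a 1 0 - a 2 0)/4) * hC1 + ((ε * (a 1 0 - a 0 0))/4) * hC2
end

section
/- Let U, V, O be open subsets of ℝ^d such that for all x ∈ U and y ∈ V, the segment [x, y] is contained in O. Then there exists a constant C depending only on d such that for every φ ∈ W^{1,1}(O), |⨍_U φ − ⨍_V φ| ≤ C · diam(O)^{d+1} / (|U|·|V|) · ∫_O |∇φ(x)| dx, where ⨍ denotes the average integral. -/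
open MeasureTheory Metric ENNReal

section helpers
variable {E : Type*} [NormedAddCommGroup E] [NormedSpace ℝ E] [MeasurableSpace E]
  [BorelSpace E] [FiniteDimensional ℝ E]

lemma lint_comp_smul (μ : Measure E) [μ.IsAddHaarMeasure] {g : E → ℝ≥0∞}
    (hg : Measurable g) {R : ℝ} (hR : R ≠ 0) :
    ∫⁻ x, g (R • x) ∂μ = ENNReal.ofReal |(R ^ Module.finrank ℝ E)⁻¹| * ∫⁻ x, g x ∂μ := by
  rw [← lintegral_map hg (measurable_const_smul R), Measure.map_addHaar_smul μ hR,
    lintegral_smul_measure, smul_eq_mul]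

lemma lint_comp_add_smul (μ : Measure E) [μ.IsAddHaarMeasure] {g : E → ℝ≥0∞}
    (hg : Measurable g) (a : E) {R : ℝ} (hR : R ≠ 0) :
    ∫⁻ x, g (a + R • x) ∂μ = ENNReal.ofReal |(R ^ Module.finrank ℝ E)⁻¹| * ∫⁻ x, g x ∂μ := by
  calc ∫⁻ x, g (a + R • x) ∂μ = ∫⁻ x, (fun z => g (a + z)) (R • x) ∂μ := rfl
  _ = ENNReal.ofReal |(R ^ Module.finrank ℝ E)⁻¹| * ∫⁻ z, g (a + z) ∂μ :=
      lint_comp_smul μ (hg.comp (measurable_const_add a)) hR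
  _ = _ := by rw [lintegral_add_left_eq_self (fun z => g z) a]

lemma inv_pow_le_pow (d : ℕ) {c : ℝ} (hc : 0 < c) (h : 1 ≤ 2 * c) : (c ^ d)⁻¹ ≤ 2 ^ d := by
  rw [inv_le_comm₀ (by positivity) (by positivity)]
  calc ((2:ℝ) ^ d)⁻¹ = (2⁻¹) ^ d := by rw [inv_pow]
  _ ≤ c ^ d := pow_le_pow_left₀ (by norm_num) (by linarith) d
end helpers

set_option maxHeartbeats 2000000 in
/-- comparison of averages on two neighbouring sets. If every segment joining a
point of `U` to a point of `V` stays in `O`, then there is `C` depending only on `d` with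
`|⨍_U φ − ⨍_V φ| ≤ C diam(O)^{d+1} / (|U||V|) ∫_O |∇φ|` for every `φ ∈ W^{1,1}(O)`
(formalised as a differentiable function on `O` whose gradient is integrable). -/
theorem stmt3 (d : ℕ) :
    ∃ C > 0, ∀ U V O : Set (EuclideanSpace ℝ (Fin d)),
      IsOpen U → IsOpen V → IsOpen O → Bornology.IsBounded O →
      0 < (volume U).toReal → 0 < (volume V).toReal →
      (∀ x ∈ U, ∀ y ∈ V, segment ℝ x y ⊆ O) →
      ∀ φ : EuclideanSpace ℝ (Fin d) → ℝ,
        (∀ x ∈ O, DifferentiableAt ℝ φ x) →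
        IntegrableOn φ O volume →
        IntegrableOn (fun x => ‖gradient φ x‖) O volume →
        |((volume U).toReal)⁻¹ * ∫ x in U, φ x -
            ((volume V).toReal)⁻¹ * ∫ x in V, φ x| ≤
          C * diam O ^ (d + 1) / ((volume U).toReal * (volume V).toReal) *
            ∫ x in O, ‖gradient φ x‖ := by
  classical
  set K : ℝ≥0∞ := volume (closedBall (0 : EuclideanSpace ℝ (Fin d)) 1) with hK
  refine ⟨2 ^ (d + 1) * K.toReal + 1,
    add_pos_of_nonneg_of_pos (by positivity) one_pos, ?_⟩
  intro U V O hU hV hO hObd haU haV hseg φ hφd hφint hgint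
  set a := (volume U).toReal with ha
  set b := (volume V).toReal with hb
  set Lr : ℝ := ∫ x in O, ‖gradient φ x‖ with hLr
  have hLr0 : 0 ≤ Lr := integral_nonneg fun x => norm_nonneg _
  set D := diam O with hD'
  have hD0 : (0:ℝ) ≤ D := by rw [hD']; exact diam_nonneg
  set C : ℝ := 2 ^ (d + 1) * K.toReal + 1 with hC
  have hC0 : 0 < C := add_pos_of_nonneg_of_pos (by positivity) one_pos
  have hUne : U.Nonempty := by
    by_contra h
    rw [Set.not_nonempty_iff_eq_empty] at h
    rw [ha, h] at haU; simp at haU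
  have hVne : V.Nonempty := by
    by_contra h
    rw [Set.not_nonempty_iff_eq_empty] at h
    rw [hb, h] at haV; simp at haV
  have hUO : U ⊆ O := fun x hx => hseg x hx _ hVne.choose_spec (left_mem_segment ℝ _ _)
  have hVO : V ⊆ O := fun y hy => hseg _ hUne.choose_spec y hy (right_mem_segment ℝ _ _)
  have hRHS0 : 0 ≤ C * D ^ (d + 1) / (a * b) * Lr := by
    apply mul_nonneg _ hLr0
    apply div_nonneg _ (mul_nonneg haU.le haV.le)
    exact mul_nonneg hC0.le (pow_nonneg hD0 _)
  obtain ⟨x₀, hx₀⟩ := hUne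
  have hOball : O ⊆ closedBall x₀ D := fun z hz =>
    mem_closedBall.mpr (by rw [hD']; exact dist_le_diam_of_mem hObd hz (hUO hx₀))
  have hUfin : volume U < ⊤ :=
    (measure_mono (hUO.trans hOball)).trans_lt measure_closedBall_lt_top
  have hVfin : volume V < ⊤ :=
    (measure_mono (hVO.trans hOball)).trans_lt measure_closedBall_lt_top
  have hφU : IntegrableOn φ U volume := hφint.mono_set hUO
  have hφV : IntegrableOn φ V volume := hφint.mono_set hVO
  set A := ∫ x in U, φ x with hA
  set B := ∫ y in V, φ y with hB
  have hLHS : (∫ x in U, (φ x - b⁻¹ * B)) = A - a * (b⁻¹ * B) := by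
    rw [integral_sub hφU (integrableOn_const hUfin.ne), setIntegral_const,
      smul_eq_mul, measureReal_def, ← ha, ← hA]
  rw [hLHS]
  have hLHS2 : a⁻¹ * (A - a * (b⁻¹ * B)) = a⁻¹ * A - b⁻¹ * B := by
    field_simp
  rw [hLHS2]
  by_cases hsub : Subsingleton (EuclideanSpace ℝ (Fin d))
  · have hUV : U = V := by
      obtain ⟨u, hu⟩ := hVne
      ext z
      constructor
      · intro _; rwa [Subsingleton.elim z u]
      · intro _; rwa [Subsingleton.elim z x₀]
    have hab : a = b := by rw [ha, hb, hUV]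
    have hAB : A = B := by rw [hA, hB, hUV]
    rw [hab, hAB, sub_self, abs_zero]
    apply mul_nonneg _ hLr0
    apply div_nonneg _ (mul_nonneg haV.le haV.le)
    exact mul_nonneg hC0.le (pow_nonneg hD0 _)
  haveI : Nontrivial (EuclideanSpace ℝ (Fin d)) := not_subsingleton_iff_nontrivial.mp hsub
  haveI : NullSingletonClass (volume : Measure (EuclideanSpace ℝ (Fin d))) := inferInstance
  have hD : 0 < D := by
    rcases lt_or_eq_of_le hD0 with h | h
    · exact h
    · exfalso
      have hsing : O ⊆ {x₀} := by
        intro z hz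
        have h1 : dist z x₀ ≤ diam O := dist_le_diam_of_mem hObd hz (hUO hx₀)
        rw [← hD', ← h] at h1
        simpa [dist_le_zero] using h1
      have h0 : volume U = 0 :=
        le_zero_iff.mp ((measure_mono (hUO.trans hsing)).trans_eq (measure_singleton x₀))
      rw [ha, h0] at haU; simp at haU
  -- measurability setup
  have hOm : MeasurableSet O := hO.measurableSet
  have hUm : MeasurableSet U := hU.measurableSet
  have hVm : MeasurableSet V := hV.measurableSet
  have hgradm : Measurable (gradient φ) :=
    (LinearIsometryEquiv.continuous _).measurable.comp (measurable_fderiv ℝ φ)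
  have hnormgrad : ∀ z, ‖gradient φ z‖ = ‖fderiv ℝ φ z‖ := fun z =>
    (InnerProductSpace.toDual ℝ (EuclideanSpace ℝ (Fin d))).symm.norm_map _
  set G : EuclideanSpace ℝ (Fin d) → ℝ≥0∞ :=
    O.indicator (fun z => (‖gradient φ z‖₊ : ℝ≥0∞)) with hG
  have hGm : Measurable G := (hgradm.enorm).indicator hOm
  have hGO : ∀ z ∈ O, G z = (‖gradient φ z‖₊ : ℝ≥0∞) := fun z hz => Set.indicator_of_mem hz _
  set L' : ℝ≥0∞ := ∫⁻ z, G z with hL'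
  have hL'eq : L' = ENNReal.ofReal Lr := by
    have h1 : ∀ z : EuclideanSpace ℝ (Fin d),
        (‖gradient φ z‖₊ : ℝ≥0∞) = (‖‖gradient φ z‖‖₊ : ℝ≥0∞) := fun z => by rw [nnnorm_norm]
    calc L' = ∫⁻ z in O, (‖gradient φ z‖₊ : ℝ≥0∞) := by rw [hL', hG, lintegral_indicator hOm]
    _ = ∫⁻ z in O, (‖‖gradient φ z‖‖₊ : ℝ≥0∞) := by simp_rw [h1]
    _ = ENNReal.ofReal (∫ z in O, ‖‖gradient φ z‖‖) :=
        (ofReal_integral_norm_eq_lintegral_enorm hgint).symm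
    _ = ENNReal.ofReal Lr := by rw [hLr]; congr 1; apply integral_congr_ae; filter_upwards with z; rw [norm_norm]
  set T : Set ℝ := Set.Icc 0 1 with hT
  -- pointwise FTC estimate
  have key_pt : ∀ x ∈ U, ∀ y ∈ V,
      (‖φ x - φ y‖₊ : ℝ≥0∞) ≤
        ENNReal.ofReal D * ∫⁻ t in T, G (y + t • (x - y)) := by
    intro x hx y hy
    have hsegO : ∀ t ∈ T, y + t • (x - y) ∈ O := by
      intro t ht
      apply hseg x hx y hy
      rw [segment_symm, segment_eq_image']
      exact ⟨t, ht, rfl⟩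
    by_cases hfin : (∫⁻ t in T, G (y + t • (x - y))) = ⊤
    · rw [hfin, ENNReal.mul_top (by simpa using (ENNReal.ofReal_pos.mpr hD).ne')]
      exact le_top
    set γ : ℝ → EuclideanSpace ℝ (Fin d) := fun t => y + t • (x - y) with hγ
    have hγc : Continuous γ := by fun_prop
    have hInt : IntegrableOn (fun t => ‖gradient φ (γ t)‖) T := by
      constructor
      · exact ((hgradm.norm).comp hγc.measurable).aestronglyMeasurable
      · show (∫⁻ t in T, (‖‖gradient φ (γ t)‖‖₊ : ℝ≥0∞)) < ⊤
        have heq : ∫⁻ t in T, (‖‖gradient φ (γ t)‖‖₊ : ℝ≥0∞) = ∫⁻ t in T, G (γ t) := by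
          apply setLIntegral_congr_fun measurableSet_Icc
          intro t ht
          beta_reduce
          rw [hGO (γ t) (hsegO t ht), nnnorm_norm]
        rw [heq]
        exact Ne.lt_top hfin
    have hψm : Measurable fun t => fderiv ℝ φ (γ t) (x - y) :=
      (measurable_fderiv_apply_const ℝ φ (x - y)).comp hγc.measurable
    have hψle : ∀ t ∈ T, ‖fderiv ℝ φ (γ t) (x - y)‖ ≤ ‖gradient φ (γ t)‖ * ‖x - y‖ := by
      intro t ht
      calc ‖fderiv ℝ φ (γ t) (x - y)‖ ≤ ‖fderiv ℝ φ (γ t)‖ * ‖x - y‖ :=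
            ContinuousLinearMap.le_opNorm _ _
      _ = ‖gradient φ (γ t)‖ * ‖x - y‖ := by rw [hnormgrad]
    have hIccEq : Set.uIcc (0:ℝ) 1 = T := Set.uIcc_of_le zero_le_one
    have hInt2 : IntervalIntegrable (fun t => ‖gradient φ (γ t)‖ * ‖x - y‖) volume 0 1 := by
      apply IntegrableOn.intervalIntegrable
      rw [hIccEq]
      exact hInt.mul_const _
    have hψint : IntervalIntegrable (fun t => fderiv ℝ φ (γ t) (x - y)) volume 0 1 := by
      apply IntegrableOn.intervalIntegrable
      rw [hIccEq]
      refine Integrable.mono' (hInt.mul_const ‖x - y‖) hψm.aestronglyMeasurable ?_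
      exact (ae_restrict_iff' measurableSet_Icc).2 (Filter.Eventually.of_forall hψle)
    have hderiv : ∀ t ∈ Set.uIcc (0:ℝ) 1,
        HasDerivAt (fun s => φ (γ s)) (fderiv ℝ φ (γ t) (x - y)) t := by
      intro t ht
      rw [hIccEq] at ht
      have h1 : HasDerivAt γ (x - y) t := by
        simpa [hγ] using ((hasDerivAt_id t).smul_const (x - y)).const_add y
      exact ((hφd _ (hsegO t ht)).hasFDerivAt.comp_hasDerivAt t h1)
    have hFTC : φ x - φ y = ∫ t in (0:ℝ)..1, fderiv ℝ φ (γ t) (x - y) := by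
      rw [intervalIntegral.integral_eq_sub_of_hasDerivAt hderiv hψint]
      simp [hγ]
    have hxy : ‖x - y‖ ≤ D := by
      rw [← dist_eq_norm, hD']
      exact dist_le_diam_of_mem hObd (hUO hx) (hVO hy)
    have habs : ‖φ x - φ y‖ ≤ D * ∫ t in T, ‖gradient φ (γ t)‖ := by
      rw [hFTC]
      calc ‖∫ t in (0:ℝ)..1, fderiv ℝ φ (γ t) (x - y)‖
          ≤ ∫ t in (0:ℝ)..1, ‖fderiv ℝ φ (γ t) (x - y)‖ :=
            intervalIntegral.norm_integral_le_integral_norm zero_le_one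
      _ ≤ ∫ t in (0:ℝ)..1, ‖gradient φ (γ t)‖ * ‖x - y‖ := by
            apply intervalIntegral.integral_mono_on zero_le_one hψint.norm hInt2
            exact hψle
      _ = (∫ t in T, ‖gradient φ (γ t)‖) * ‖x - y‖ := by
            rw [intervalIntegral.integral_of_le zero_le_one, hT,
              ← integral_Icc_eq_integral_Ioc, integral_mul_const]
      _ ≤ D * ∫ t in T, ‖gradient φ (γ t)‖ := by
            rw [mul_comm]
            apply mul_le_mul_of_nonneg_right hxy
            exact integral_nonneg fun t => norm_nonneg _
    calc (‖φ x - φ y‖₊ : ℝ≥0∞) = ENNReal.ofReal ‖φ x - φ y‖ := (ofReal_norm _).symm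
    _ ≤ ENNReal.ofReal (D * ∫ t in T, ‖gradient φ (γ t)‖) := ENNReal.ofReal_le_ofReal habs
    _ = ENNReal.ofReal D * ENNReal.ofReal (∫ t in T, ‖gradient φ (γ t)‖) :=
        ENNReal.ofReal_mul hD0
    _ ≤ ENNReal.ofReal D * ∫⁻ t in T, G (γ t) := by
        gcongr
        rw [ofReal_integral_eq_lintegral_ofReal hInt
          (Filter.Eventually.of_forall fun t => norm_nonneg _)]
        apply le_of_eq
        apply setLIntegral_congr_fun measurableSet_Icc
        intro t ht
        beta_reduce
        rw [hGO (γ t) (hsegO t ht), ofReal_norm, enorm_eq_nnnorm]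
  -- change of variables machinery
  have hnd : Module.finrank ℝ (EuclideanSpace ℝ (Fin d)) = d := finrank_euclideanSpace_fin
  have coeff_le : ∀ c : ℝ, 1/2 ≤ c → c ≤ 1 →
      ENNReal.ofReal |(c ^ Module.finrank ℝ (EuclideanSpace ℝ (Fin d)))⁻¹| ≤
        ENNReal.ofReal (2 ^ d) := by
    intro c hc1 hc2
    apply ENNReal.ofReal_le_ofReal
    rw [abs_of_nonneg (inv_nonneg.2 (pow_nonneg (by linarith) _)), hnd]
    exact inv_pow_le_pow d (by linarith) (by linarith)
  have hyCV : ∀ (t : ℝ), t ∈ T → t ≤ 1/2 → ∀ x : EuclideanSpace ℝ (Fin d),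
      (∫⁻ y in V, G (y + t • (x - y))) ≤ ENNReal.ofReal (2 ^ d) * L' := by
    intro t ht ht2 x
    have hc : (0:ℝ) < 1 - t := by linarith
    calc ∫⁻ y in V, G (y + t • (x - y)) ≤ ∫⁻ y, G (y + t • (x - y)) :=
          setLIntegral_le_lintegral _ _
    _ = ∫⁻ y, G (t • x + (1 - t) • y) := by
          apply lintegral_congr; intro y; congr 1; module
    _ = ENNReal.ofReal |((1 - t) ^ Module.finrank ℝ (EuclideanSpace ℝ (Fin d)))⁻¹| * L' := by
          rw [hL']; exact lint_comp_add_smul volume hGm (t • x) hc.ne'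
    _ ≤ ENNReal.ofReal (2 ^ d) * L' :=
          mul_le_mul_left (coeff_le _ (by linarith) (by linarith [ht.1])) _
  have hxCV : ∀ (t : ℝ), t ∈ T → 1/2 ≤ t → ∀ y : EuclideanSpace ℝ (Fin d),
      (∫⁻ x in U, G (y + t • (x - y))) ≤ ENNReal.ofReal (2 ^ d) * L' := by
    intro t ht ht2 y
    have hc : (0:ℝ) < t := by linarith
    calc ∫⁻ x in U, G (y + t • (x - y)) ≤ ∫⁻ x, G (y + t • (x - y)) :=
          setLIntegral_le_lintegral _ _
    _ = ∫⁻ x, G ((1 - t) • y + t • x) := by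
          apply lintegral_congr; intro x; congr 1; module
    _ = ENNReal.ofReal |(t ^ Module.finrank ℝ (EuclideanSpace ℝ (Fin d)))⁻¹| * L' := by
          rw [hL']; exact lint_comp_add_smul volume hGm ((1 - t) • y) hc.ne'
    _ ≤ ENNReal.ofReal (2 ^ d) * L' :=
          mul_le_mul_left (coeff_le _ ht2 ht.2) _
  -- measure bounds
  have hKfin : K ≠ ⊤ := measure_closedBall_lt_top.ne
  have hball : volume (closedBall x₀ D) = ENNReal.ofReal (D ^ d) * K := by
    have h2 := Measure.addHaar_closedBall' (volume : Measure (EuclideanSpace ℝ (Fin d))) x₀ hD0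
    rw [h2, finrank_euclideanSpace_fin, ← hK]
  have hmU : volume U ≤ ENNReal.ofReal (D ^ d) * K :=
    (measure_mono (hUO.trans hOball)).trans_eq hball
  have hmV : volume V ≤ ENNReal.ofReal (D ^ d) * K :=
    (measure_mono (hVO.trans hOball)).trans_eq hball
  -- Fubini swaps
  have hswap1 : ∀ x : EuclideanSpace ℝ (Fin d),
      (∫⁻ y in V, ∫⁻ t in T, G (y + t • (x - y))) =
        ∫⁻ t in T, ∫⁻ y in V, G (y + t • (x - y)) := by
    intro x
    apply lintegral_lintegral_swap
    apply Measurable.aemeasurable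
    apply hGm.comp
    fun_prop
  have hmeas2 : Measurable (Function.uncurry fun (x : EuclideanSpace ℝ (Fin d)) (t : ℝ) =>
      ∫⁻ y in V, G (y + t • (x - y))) := by
    apply Measurable.lintegral_prod_right'
      (f := fun q : ((EuclideanSpace ℝ (Fin d)) × ℝ) × (EuclideanSpace ℝ (Fin d)) =>
        G (q.2 + q.1.2 • (q.1.1 - q.2)))
    apply hGm.comp
    fun_prop
  have hswap2 :
      (∫⁻ x in U, ∫⁻ t in T, ∫⁻ y in V, G (y + t • (x - y))) =
        ∫⁻ t in T, ∫⁻ x in U, ∫⁻ y in V, G (y + t • (x - y)) := by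
    apply lintegral_lintegral_swap
    exact hmeas2.aemeasurable
  have hswap3 : ∀ t : ℝ,
      (∫⁻ x in U, ∫⁻ y in V, G (y + t • (x - y))) =
        ∫⁻ y in V, ∫⁻ x in U, G (y + t • (x - y)) := by
    intro t
    apply lintegral_lintegral_swap
    apply Measurable.aemeasurable
    apply hGm.comp
    fun_prop
  have hBt : ∀ t ∈ T, (∫⁻ x in U, ∫⁻ y in V, G (y + t • (x - y))) ≤
      (volume U + volume V) * (ENNReal.ofReal (2 ^ d) * L') := by
    intro t ht
    rcases le_or_gt t (1/2) with h2 | h2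
    · calc ∫⁻ x in U, ∫⁻ y in V, G (y + t • (x - y))
          ≤ ∫⁻ _x in U, ENNReal.ofReal (2 ^ d) * L' :=
            lintegral_mono fun x => hyCV t ht h2 x
      _ = ENNReal.ofReal (2 ^ d) * L' * volume U := setLIntegral_const _ _
      _ ≤ (volume U + volume V) * (ENNReal.ofReal (2 ^ d) * L') := by
            rw [mul_comm]; exact mul_le_mul_left le_self_add _
    · calc ∫⁻ x in U, ∫⁻ y in V, G (y + t • (x - y))
          = ∫⁻ y in V, ∫⁻ x in U, G (y + t • (x - y)) := hswap3 t
      _ ≤ ∫⁻ _y in V, ENNReal.ofReal (2 ^ d) * L' :=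
            lintegral_mono fun y => hxCV t ht h2.le y
      _ = ENNReal.ofReal (2 ^ d) * L' * volume V := setLIntegral_const _ _
      _ ≤ (volume U + volume V) * (ENNReal.ofReal (2 ^ d) * L') := by
            rw [mul_comm]; exact mul_le_mul_left le_add_self _
  have hI : (∫⁻ x in U, ∫⁻ y in V, ∫⁻ t in T, G (y + t • (x - y))) ≤
      (volume U + volume V) * (ENNReal.ofReal (2 ^ d) * L') := by
    calc (∫⁻ x in U, ∫⁻ y in V, ∫⁻ t in T, G (y + t • (x - y)))
        = ∫⁻ x in U, ∫⁻ t in T, ∫⁻ y in V, G (y + t • (x - y)) :=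
          lintegral_congr fun x => hswap1 x
    _ = ∫⁻ t in T, ∫⁻ x in U, ∫⁻ y in V, G (y + t • (x - y)) := hswap2
    _ ≤ ∫⁻ _t in T, (volume U + volume V) * (ENNReal.ofReal (2 ^ d) * L') :=
          setLIntegral_mono measurable_const hBt
    _ = (volume U + volume V) * (ENNReal.ofReal (2 ^ d) * L') * volume T :=
          setLIntegral_const _ _
    _ = (volume U + volume V) * (ENNReal.ofReal (2 ^ d) * L') := by
          rw [hT, Real.volume_Icc]; simp
  -- the double-integral bound
  set num := ∫ x in U, ∫ y in V, (φ x - φ y) with hnum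
  have hnum_le : (‖num‖₊ : ℝ≥0∞) ≤ ENNReal.ofReal D *
      ((volume U + volume V) * (ENNReal.ofReal (2 ^ d) * L')) := by
    calc (‖num‖₊ : ℝ≥0∞) ≤ ∫⁻ x in U, ‖∫ y in V, (φ x - φ y)‖₊ :=
          enorm_integral_le_lintegral_enorm _
    _ ≤ ∫⁻ x in U, ∫⁻ y in V, (‖φ x - φ y‖₊ : ℝ≥0∞) :=
          lintegral_mono fun x => enorm_integral_le_lintegral_enorm _
    _ ≤ ∫⁻ x in U, ∫⁻ y in V, ENNReal.ofReal D * ∫⁻ t in T, G (y + t • (x - y)) := by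
          apply lintegral_mono_ae
          rw [ae_restrict_iff' hUm]
          apply Filter.Eventually.of_forall
          intro x hx
          apply lintegral_mono_ae
          rw [ae_restrict_iff' hVm]
          apply Filter.Eventually.of_forall
          intro y hy
          exact key_pt x hx y hy
    _ = ENNReal.ofReal D * ∫⁻ x in U, ∫⁻ y in V, ∫⁻ t in T, G (y + t • (x - y)) := by
          rw [← lintegral_const_mul' _ _ ENNReal.ofReal_ne_top]
          apply lintegral_congr
          intro x
          rw [← lintegral_const_mul' _ _ ENNReal.ofReal_ne_top]
    _ ≤ _ := mul_le_mul_right hI _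
  set Kr := K.toReal with hKr
  have hKr0 : 0 ≤ Kr := ENNReal.toReal_nonneg
  have hKofReal : K = ENNReal.ofReal Kr := (ENNReal.ofReal_toReal hKfin).symm
  have hDK0 : 0 ≤ D ^ d * Kr := mul_nonneg (pow_nonneg hD0 _) hKr0
  have hsum_le : volume U + volume V ≤ ENNReal.ofReal (2 * (D ^ d * Kr)) := by
    calc volume U + volume V
        ≤ (ENNReal.ofReal (D ^ d) * K) + (ENNReal.ofReal (D ^ d) * K) := add_le_add hmU hmV
    _ = ENNReal.ofReal (2 * (D ^ d * Kr)) := by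
          rw [hKofReal, ← ENNReal.ofReal_mul (pow_nonneg hD0 _), two_mul,
            ← ENNReal.ofReal_add hDK0 hDK0]
  have hfinal : (‖num‖₊ : ℝ≥0∞) ≤
      ENNReal.ofReal (D * (2 * (D ^ d * Kr) * (2 ^ d * Lr))) := by
    calc (‖num‖₊ : ℝ≥0∞)
        ≤ ENNReal.ofReal D * ((volume U + volume V) * (ENNReal.ofReal (2 ^ d) * L')) := hnum_le
    _ ≤ ENNReal.ofReal D * (ENNReal.ofReal (2 * (D ^ d * Kr)) *
          (ENNReal.ofReal (2 ^ d) * ENNReal.ofReal Lr)) := by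
          gcongr
          exact le_of_eq hL'eq
    _ = ENNReal.ofReal (D * (2 * (D ^ d * Kr) * (2 ^ d * Lr))) := by
          rw [← ENNReal.ofReal_mul (by positivity : (0:ℝ) ≤ 2 ^ d),
            ← ENNReal.ofReal_mul (by linarith : (0:ℝ) ≤ 2 * (D ^ d * Kr)),
            ← ENNReal.ofReal_mul hD0]
  have hM0 : 0 ≤ D * (2 * (D ^ d * Kr) * (2 ^ d * Lr)) := by
    apply mul_nonneg hD0
    apply mul_nonneg (by linarith)
    exact mul_nonneg (by positivity) hLr0
  have hnumabs : |num| ≤ D * (2 * (D ^ d * Kr) * (2 ^ d * Lr)) := by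
    have h3 := hfinal
    change ‖num‖ₑ ≤ _ at h3
    rw [Real.enorm_eq_ofReal_abs] at h3
    exact (ENNReal.ofReal_le_ofReal_iff hM0).mp h3
  -- identify num with b * A - a * B
  have hinner : ∀ x : EuclideanSpace ℝ (Fin d), (∫ y in V, (φ x - φ y)) = b * φ x - B := by
    intro x
    rw [integral_sub (integrableOn_const (C := φ x) hVfin.ne) hφV, setIntegral_const,
      smul_eq_mul, measureReal_def, ← hb, ← hB]
  have hnum_eq : num = b * A - a * B := by
    rw [hnum]
    calc ∫ x in U, ∫ y in V, (φ x - φ y) = ∫ x in U, (b * φ x - B) := by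
          apply integral_congr_ae
          filter_upwards with x
          rw [hinner]
    _ = b * A - a * B := by
          rw [integral_sub (hφU.const_mul b) (integrableOn_const hUfin.ne),
            integral_const_mul, setIntegral_const, smul_eq_mul, measureReal_def, ← ha, ← hA]
  -- final algebra
  have hsplit : a⁻¹ * A - b⁻¹ * B = num / (a * b) := by
    rw [hnum_eq]
    field_simp
  rw [hsplit, abs_div, abs_of_pos (mul_pos haU haV), div_mul_eq_mul_div]
  gcongr
  calc |num| ≤ D * (2 * (D ^ d * Kr) * (2 ^ d * Lr)) := hnumabs
  _ = (2 ^ (d + 1) * Kr) * D ^ (d + 1) * Lr := by ring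
  _ ≤ C * D ^ (d + 1) * Lr := by
      have h1 : (2:ℝ) ^ (d + 1) * Kr ≤ C := by rw [hC]; linarith
      exact mul_le_mul_of_nonneg_right (mul_le_mul_of_nonneg_right h1 (pow_nonneg hD0 _)) hLr0
end

section
/- Let G = (G^i)_{i∈I} be a P₁-exact gradient reconstruction on a bounded set U ⊂ ℝ^d (star-shaped with respect to a ball of diameter ≥ θ^{-1}·diam(U)) upon points S = (x_i)_{i∈I} ⊂ Ū, d ≤ 3, and let φ ∈ H²(U) ∩ C(Ū). Suppose an affine L satisfies sup_Ū |φ − L| ≤ C₁ diam(U)² |U|^{-1/2} ‖φ‖_{H²(U)} and ‖∇L − ∇φ‖_{L²(U)} ≤ C₁ diam(U) ‖φ‖_{H²(U)}. If ξ_i are values with |ξ_i − L(x_i)| ≤ C₁ diam(U)² |U|^{-1/2} ‖φ‖_{H²(U)} for all i, then ‖Gξ − ∇φ‖_{L²(U)^d} ≤ C₂ (1 + ‖G‖) diam(U) ‖φ‖_{H²(U)}, with C₂ depending only on C₁. -/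
open Metric MeasureTheory ENNReal

lemma l2_tri {α : Type*} [MeasurableSpace α] {μ : Measure α} {E : Type*}
    [NormedAddCommGroup E] {f g : α → E} (hf : MemLp f 2 μ) (hg : MemLp g 2 μ) :
    (∫ x, ‖f x + g x‖ ^ 2 ∂μ) ^ ((1 : ℝ) / 2) ≤
      (∫ x, ‖f x‖ ^ 2 ∂μ) ^ ((1 : ℝ) / 2) + (∫ x, ‖g x‖ ^ 2 ∂μ) ^ ((1 : ℝ) / 2) := by
  have hfg := hf.add hg
  have key := eLpNorm_add_le hf.aestronglyMeasurable hg.aestronglyMeasurable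
    (by norm_num : (1 : ℝ≥0∞) ≤ 2)
  rw [hfg.eLpNorm_eq_integral_rpow_norm two_ne_zero ENNReal.ofNat_ne_top,
      hf.eLpNorm_eq_integral_rpow_norm two_ne_zero ENNReal.ofNat_ne_top,
      hg.eLpNorm_eq_integral_rpow_norm two_ne_zero ENNReal.ofNat_ne_top] at key
  have h2 : ((2 : ℝ≥0∞)).toReal = (2 : ℝ) := by norm_num
  simp only [h2, Pi.add_apply, Real.rpow_two, ← Real.rpow_natCast _ 2] at key ⊢
  norm_num at key ⊢
  rw [← ENNReal.ofReal_add (by positivity) (by positivity)] at key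
  have := (ENNReal.ofReal_le_ofReal_iff (by positivity)).mp key
  simpa [one_div] using this

/-- The `H²(U)` norm of `φ`. -/
noncomputable def H2norm {d : ℕ} (U : Set (EuclideanSpace ℝ (Fin d)))
    (φ : EuclideanSpace ℝ (Fin d) → ℝ) : ℝ :=
  (∫ x in U, ((φ x) ^ 2 + ‖fderiv ℝ φ x‖ ^ 2 + ‖iteratedFDeriv ℝ 2 φ x‖ ^ 2)) ^ ((1 : ℝ) / 2)

/-- The norm `‖G‖ = diam(U)|U|^{−1/2}‖Σ_i |Gⁱ|‖_{L²(U)}` of a gradient reconstruction. -/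
noncomputable def normG {d : ℕ} {I : Type} [Fintype I]
    (U : Set (EuclideanSpace ℝ (Fin d)))
    (G : I → EuclideanSpace ℝ (Fin d) → EuclideanSpace ℝ (Fin d)) : ℝ :=
  diam U * (volume U).toReal ^ (-(1 : ℝ) / 2) *
    (∫ x in U, (∑ i, ‖G i x‖) ^ 2) ^ ((1 : ℝ) / 2)

/-- interpolation error for a `P₁`-exact gradient reconstruction. If `G` is
`P₁`-exact on `U` upon points `(x_i) ⊂ Ū` (`U` star-shaped w.r.t. a ball of diameter
`≥ θ⁻¹ diam U`, `d ≤ 3`), `L` is affine with `sup_Ū |φ − L| ≤ C₁ diam(U)²|U|^{−1/2}‖φ‖_{H²}`,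
`‖∇L − ∇φ‖_{L²(U)} ≤ C₁ diam(U)‖φ‖_{H²}`, and `|ξ_i − L(x_i)| ≤ C₁ diam(U)²|U|^{−1/2}‖φ‖_{H²}`,
then `‖Gξ − ∇φ‖_{L²(U)^d} ≤ C₂ (1 + ‖G‖) diam(U) ‖φ‖_{H²(U)}` with `C₂ = C₂(C₁)`. -/
theorem stmt13 (C₁ : ℝ) (hC₁ : 0 < C₁) :
    ∃ C₂ > 0, ∀ (d : ℕ), d ≤ 3 → ∀ {I : Type} [Fintype I] [Nonempty I],
      ∀ (θ : ℝ) (U : Set (EuclideanSpace ℝ (Fin d))) (z : EuclideanSpace ℝ (Fin d)) (r : ℝ)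
        (p : I → EuclideanSpace ℝ (Fin d))
        (G : I → EuclideanSpace ℝ (Fin d) → EuclideanSpace ℝ (Fin d))
        (φ : EuclideanSpace ℝ (Fin d) → ℝ)
        (L : EuclideanSpace ℝ (Fin d) →ᵃ[ℝ] ℝ) (ξ : I → ℝ),
      0 < θ → Bornology.IsBounded U → 0 < (volume U).toReal → 0 < r → ball z r ⊆ U →
      (∀ y ∈ ball z r, ∀ x ∈ U, segment ℝ y x ⊆ U) →
      θ⁻¹ * diam U ≤ 2 * r →
      (∀ i, p i ∈ closure U) →
      (∀ i, MemLp (G i) 2 (volume.restrict U)) →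
      (∀ (L' : EuclideanSpace ℝ (Fin d) →L[ℝ] ℝ) (c : ℝ),
        ∀ᵐ x ∂(volume.restrict U),
          ∑ i, (L' (p i) + c) • G i x = (InnerProductSpace.toDual ℝ _).symm L') →
      ContDiff ℝ 2 φ →
      (∀ x ∈ closure U,
        |φ x - L x| ≤ C₁ * diam U ^ 2 * (volume U).toReal ^ (-(1 : ℝ) / 2) * H2norm U φ) →
      (∫ x in U, ‖gradient φ x -
          (InnerProductSpace.toDual ℝ _).symm (LinearMap.toContinuousLinearMap L.linear)‖ ^ 2)
          ^ ((1 : ℝ) / 2) ≤ C₁ * diam U * H2norm U φ →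
      (∀ i, |ξ i - L (p i)| ≤ C₁ * diam U ^ 2 * (volume U).toReal ^ (-(1 : ℝ) / 2) * H2norm U φ) →
      (∫ x in U, ‖(∑ i, ξ i • G i x) - gradient φ x‖ ^ 2) ^ ((1 : ℝ) / 2) ≤
        C₂ * (1 + normG U G) * diam U * H2norm U φ := by
  refine ⟨C₁, hC₁, ?_⟩
  intro d hd I _ _ θ U z r p G φ L ξ hθ hU hvol hr hball hstar hdiam hp hG hP hφ hsup hLgrad hξ
  classical
  set μ := volume.restrict U with hμ
  haveI : IsFiniteMeasure μ := ⟨by simpa [μ, Measure.restrict_apply_univ] using hU.measure_lt_top⟩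
  haveI : IsFiniteMeasure (volume.restrict (closure U)) :=
    ⟨by simpa [Measure.restrict_apply_univ] using hU.isCompact_closure.measure_lt_top⟩
  have hH2 : 0 ≤ H2norm U φ :=
    Real.rpow_nonneg (integral_nonneg fun x => by positivity) _
  set A := C₁ * diam U ^ 2 * (volume U).toReal ^ (-(1 : ℝ) / 2) * H2norm U φ with hAdef
  have hA0 : 0 ≤ A := by
    have : (0:ℝ) ≤ (volume U).toReal ^ (-(1 : ℝ) / 2) := Real.rpow_nonneg ENNReal.toReal_nonneg _
    have hd0 : (0:ℝ) ≤ diam U := diam_nonneg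
    positivity
  set s : EuclideanSpace ℝ (Fin d) → ℝ := fun x => ∑ i, ‖G i x‖ with hsdef
  have hs : MemLp s 2 μ := memLp_finset_sum _ fun i _ => (hG i).norm
  set g : EuclideanSpace ℝ (Fin d) → EuclideanSpace ℝ (Fin d) :=
    fun x => ∑ i, (ξ i - L (p i)) • G i x with hgdef
  have hg : MemLp g 2 μ := memLp_finset_sum _ fun i _ => (hG i).const_smul (ξ i - L (p i))
  have hgradc : Continuous (gradient φ) :=
    (LinearIsometryEquiv.continuous _).comp (hφ.continuous_fderiv (by norm_num))
  obtain ⟨Cg, hCg⟩ := hU.isCompact_closure.exists_bound_of_continuousOn hgradc.continuousOn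
  have hgrad' : MemLp (gradient φ) 2 (volume.restrict (closure U)) :=
    MemLp.of_bound hgradc.aestronglyMeasurable Cg
      ((ae_restrict_mem measurableSet_closure).mono fun x hx => hCg x hx)
  have hgrad : MemLp (gradient φ) 2 μ :=
    hgrad'.mono_measure (Measure.restrict_mono subset_closure le_rfl)
  set v : EuclideanSpace ℝ (Fin d) :=
    (InnerProductSpace.toDual ℝ _).symm (LinearMap.toContinuousLinearMap L.linear) with hvdef
  set h : EuclideanSpace ℝ (Fin d) → EuclideanSpace ℝ (Fin d) :=
    fun x => v - gradient φ x with hhdef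
  have hh : MemLp h 2 μ := (memLp_const v).sub hgrad
  -- a.e. decomposition
  have hdec : ∀ᵐ x ∂μ, (∑ i, ξ i • G i x) - gradient φ x = g x + h x := by
    filter_upwards [hP (LinearMap.toContinuousLinearMap L.linear) (L 0)] with x hx
    have hL : ∀ i, L (p i) = (LinearMap.toContinuousLinearMap L.linear) (p i) + L 0 := by
      intro i
      have := congrFun (AffineMap.decomp L) (p i)
      simpa using this
    have hx' : ∑ i, L (p i) • G i x = v := by
      rw [hvdef, ← hx]
      exact Finset.sum_congr rfl fun i _ => by rw [hL i]
    simp only [hgdef, hhdef, sub_smul, Finset.sum_sub_distrib]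
    rw [← hx']
    abel
  have hI : (∫ x in U, ‖(∑ i, ξ i • G i x) - gradient φ x‖ ^ 2) =
      ∫ x in U, ‖g x + h x‖ ^ 2 :=
    integral_congr_ae (hdec.mono fun x hx => by dsimp only; rw [hx])
  -- bound for g
  have hptw : ∀ x, ‖g x‖ ≤ A * s x := by
    intro x
    calc ‖g x‖ ≤ ∑ i, ‖(ξ i - L (p i)) • G i x‖ := norm_sum_le _ _
      _ = ∑ i, |ξ i - L (p i)| * ‖G i x‖ := by simp [norm_smul]
      _ ≤ ∑ i, A * ‖G i x‖ :=
          Finset.sum_le_sum fun i _ => mul_le_mul_of_nonneg_right (hξ i) (norm_nonneg _)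
      _ = A * s x := by rw [hsdef, Finset.mul_sum]
  have hsint : Integrable (fun x => s x ^ 2) μ := hs.integrable_sq
  have hX : 0 ≤ ∫ x in U, s x ^ 2 := integral_nonneg fun x => by positivity
  have hIg : (∫ x in U, ‖g x‖ ^ 2) ≤ A ^ 2 * ∫ x in U, s x ^ 2 := by
    rw [← integral_const_mul]
    refine integral_mono_of_nonneg (ae_of_all _ fun x => by positivity)
      (hsint.const_mul _) (ae_of_all _ fun x => ?_)
    calc ‖g x‖ ^ 2 ≤ (A * s x) ^ 2 := pow_le_pow_left₀ (norm_nonneg _) (hptw x) 2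
      _ = A ^ 2 * s x ^ 2 := by ring
  have hnormG : normG U G =
      diam U * (volume U).toReal ^ (-(1 : ℝ) / 2) * (∫ x in U, s x ^ 2) ^ ((1 : ℝ) / 2) := rfl
  have hnG0 : 0 ≤ normG U G := by
    rw [hnormG]
    have h1 : (0:ℝ) ≤ (volume U).toReal ^ (-(1 : ℝ) / 2) := Real.rpow_nonneg ENNReal.toReal_nonneg _
    have h2 : (0:ℝ) ≤ (∫ x in U, s x ^ 2) ^ ((1:ℝ)/2) := Real.rpow_nonneg hX _
    have hd0 : (0:ℝ) ≤ diam U := diam_nonneg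
    positivity
  have hg2 : (∫ x in U, ‖g x‖ ^ 2) ^ ((1 : ℝ) / 2) ≤ C₁ * diam U * H2norm U φ * normG U G := by
    have h1 : (∫ x in U, ‖g x‖ ^ 2) ^ ((1 : ℝ) / 2) ≤
        (A ^ 2 * ∫ x in U, s x ^ 2) ^ ((1 : ℝ) / 2) :=
      Real.rpow_le_rpow (integral_nonneg fun x => by positivity) hIg (by norm_num)
    have h2 : (A ^ 2 * ∫ x in U, s x ^ 2) ^ ((1 : ℝ) / 2) =
        A * (∫ x in U, s x ^ 2) ^ ((1 : ℝ) / 2) := by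
      rw [Real.mul_rpow (sq_nonneg A) hX, ← Real.rpow_natCast A 2, ← Real.rpow_mul hA0]
      norm_num
    rw [h2] at h1
    refine h1.trans_eq ?_
    rw [hnormG, hAdef]
    ring
  have hh2 : (∫ x in U, ‖h x‖ ^ 2) ^ ((1 : ℝ) / 2) ≤ C₁ * diam U * H2norm U φ := by
    have : (∫ x in U, ‖h x‖ ^ 2) = ∫ x in U, ‖gradient φ x - v‖ ^ 2 := by
      refine integral_congr_ae (ae_of_all _ fun x => ?_)
      show ‖v - gradient φ x‖ ^ 2 = ‖gradient φ x - v‖ ^ 2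
      rw [norm_sub_rev]
    rw [this]
    exact hLgrad
  calc (∫ x in U, ‖(∑ i, ξ i • G i x) - gradient φ x‖ ^ 2) ^ ((1 : ℝ) / 2)
      = (∫ x in U, ‖g x + h x‖ ^ 2) ^ ((1 : ℝ) / 2) := by rw [hI]
    _ ≤ (∫ x in U, ‖g x‖ ^ 2) ^ ((1 : ℝ) / 2) + (∫ x in U, ‖h x‖ ^ 2) ^ ((1 : ℝ) / 2) :=
        l2_tri hg hh
    _ ≤ C₁ * diam U * H2norm U φ * normG U G + C₁ * diam U * H2norm U φ :=
        add_le_add hg2 hh2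
    _ = C₁ * (1 + normG U G) * diam U * H2norm U φ := by ring
end
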